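/- arXiv:1907.07796 — 4 statements merged into one kernel-verified Lean document; each statement's English description precedes it below -/
import Mathlib

section
/- If S is a set of n points in general position in the plane with n odd, then S admits a halving matching: every point of S can be matched to a halving line through it. -/
open Filter Set

noncomputable section

abbrev Pt : Type := ℝ × ℝ

/-- Signed area determinant of two vectors in the plane. -/
def det2 (u v : Pt) : ℝ := u.1 * v.2 - u.2 * v.1

/-- A finite point set is in general position if no three of its points are collinear. -/
def GenPos (S : Finset Pt) : Prop :=
  ∀ a ∈ S, ∀ b ∈ S, ∀ c ∈ S, a ≠ b → a ≠ c → b ≠ c →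
    ¬ Collinear ℝ ({a, b, c} : Set Pt)

/-- The line through `a` with direction `v`. -/
def lineThrough (a v : Pt) : Set Pt := {x | det2 v (x - a) = 0}

/-- `L` is a halving line of `S`: a line through at least one point of `S`
with equally many points of `S` in each open half-plane. -/
def IsHalvingLine (S : Finset Pt) (L : Set Pt) : Prop :=
  ∃ a v : Pt, v ≠ 0 ∧ L = lineThrough a v ∧ (∃ p ∈ S, p ∈ L) ∧
    Set.ncard {x ∈ (S : Set Pt) | 0 < det2 v (x - a)} =
      Set.ncard {x ∈ (S : Set Pt) | det2 v (x - a) < 0}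

/-- `S` has a halving matching: an injective assignment to each point of `S` of
a halving line through it. -/
def HasHalvingMatching (S : Finset Pt) : Prop :=
  ∃ ℓ : Pt → Set Pt,
    (∀ p ∈ S, IsHalvingLine S (ℓ p) ∧ p ∈ ℓ p) ∧
    ∀ p ∈ S, ∀ q ∈ S, p ≠ q → ℓ p ≠ ℓ q

open Finset
lemma filter_erase_of_not {P : Pt → Prop} [DecidablePred P] {a : Pt} (s : Finset Pt)
    (h : ¬ P a) : (s.erase a).filter P = s.filter P := by
  rw [Finset.filter_erase, Finset.erase_eq_of_notMem (by simp [h])]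

lemma filter_erase_card {P : Pt → Prop} [DecidablePred P] {a : Pt} {s : Finset Pt}
    (ha : a ∈ s) (h : P a) : ((s.erase a).filter P).card + 1 = (s.filter P).card := by
  rw [Finset.filter_erase]
  have hmem : a ∈ s.filter P := Finset.mem_filter.2 ⟨ha, h⟩
  rw [Finset.card_erase_of_mem hmem]
  have : 1 ≤ (s.filter P).card := Finset.card_pos.2 ⟨a, hmem⟩
  omega

lemma filter_eq_singleton {P : Pt → Prop} [DecidablePred P] {a : Pt} {s : Finset Pt}
    (ha : a ∈ s) (h : P a) (hother : ∀ x ∈ s, x ≠ a → ¬ P x) : s.filter P = {a} := by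
  ext x
  simp only [Finset.mem_filter, Finset.mem_singleton]
  constructor
  · rintro ⟨hx, hPx⟩
    by_contra hne
    exact hother x hx hne hPx
  · rintro rfl; exact ⟨ha, h⟩

lemma exists_between_left (σ : Pt → ℝ) (s : Finset Pt) (r : ℝ)
    (h : ∀ x ∈ s, r < σ x) : ∃ t : ℝ, r < t ∧ ∀ x ∈ s, t < σ x := by
  rcases s.eq_empty_or_nonempty with rfl | hne
  · exact ⟨r + 1, by linarith, by simp⟩
  · have hne' := hne.image σ
    have hmin : r < (s.image σ).min' hne' := by
      obtain ⟨y, hy, hyeq⟩ := Finset.mem_image.1 ((s.image σ).min'_mem hne')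
      rw [← hyeq]; exact h y hy
    refine ⟨(r + (s.image σ).min' hne') / 2, by linarith, ?_⟩
    intro x hx
    have := Finset.min'_le (s.image σ) (σ x) (Finset.mem_image_of_mem σ hx)
    linarith

lemma exists_between_right (σ : Pt → ℝ) (s : Finset Pt) (r : ℝ)
    (h : ∀ x ∈ s, σ x < r) : ∃ t : ℝ, t < r ∧ ∀ x ∈ s, σ x < t := by
  rcases s.eq_empty_or_nonempty with rfl | hne
  · exact ⟨r - 1, by linarith, by simp⟩
  · have hne' := hne.image σ
    have hmax : (s.image σ).max' hne' < r := by
      obtain ⟨y, hy, hyeq⟩ := Finset.mem_image.1 ((s.image σ).max'_mem hne')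
      rw [← hyeq]; exact h y hy
    refine ⟨(((s.image σ).max' hne') + r) / 2, by linarith, ?_⟩
    intro x hx
    have := Finset.le_max' (s.image σ) (σ x) (Finset.mem_image_of_mem σ hx)
    linarith

lemma exists_below (σ : Pt → ℝ) (s : Finset Pt) : ∃ t : ℝ, ∀ x ∈ s, t < σ x := by
  rcases s.eq_empty_or_nonempty with rfl | hne
  · exact ⟨0, by simp⟩
  · have hne' := hne.image σ
    refine ⟨(s.image σ).min' hne' - 1, fun x hx => ?_⟩
    have := Finset.min'_le (s.image σ) (σ x) (Finset.mem_image_of_mem σ hx)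
    linarith

lemma exists_above (σ : Pt → ℝ) (s : Finset Pt) : ∃ t : ℝ, ∀ x ∈ s, σ x < t := by
  rcases s.eq_empty_or_nonempty with rfl | hne
  · exact ⟨0, by simp⟩
  · have hne' := hne.image σ
    refine ⟨(s.image σ).max' hne' + 1, fun x hx => ?_⟩
    have := Finset.le_max' (s.image σ) (σ x) (Finset.mem_image_of_mem σ hx)
    linarith

lemma sweep (σ : Pt → ℝ) :
    ∀ N : ℕ, ∀ A B : Finset Pt, (A ∪ B).card ≤ N → Disjoint A B →
    Set.InjOn σ (A ∪ B : Finset Pt) → ∀ c : ℕ,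
    min A.card B.card ≤ c → c ≤ max A.card B.card →
    ∃ t : ℝ, (∀ x ∈ A ∪ B, σ x ≠ t) ∧
      (A.filter fun x => t < σ x).card + (B.filter fun x => σ x < t).card = c := by
  intro N
  induction N with
  | zero =>
    intro A B hcard _ _ c hc1 hc2
    have h0 : A = ∅ ∧ B = ∅ := by
      rw [← Finset.union_eq_empty]
      exact Finset.card_eq_zero.1 (le_antisymm hcard (Nat.zero_le _))
    obtain ⟨rfl, rfl⟩ := h0
    have hc0 : c = 0 := by simpa using hc2
    subst hc0
    exact ⟨0, by simp, by simp⟩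
  | succ N ih =>
    intro A B hcard hdisj hinj c hc1 hc2
    by_cases hcA : c = A.card
    · -- take t below all slopes
      obtain ⟨t, ht⟩ := exists_below σ (A ∪ B)
      refine ⟨t, fun x hx => (ht x hx).ne', ?_⟩
      rw [Finset.filter_true_of_mem (fun x hx => ht x (Finset.mem_union_left _ hx)),
          Finset.filter_false_of_mem (fun x hx => not_lt.2 (le_of_lt (ht x (Finset.mem_union_right _ hx))))]
      simp [hcA]
    by_cases hcB : c = B.card
    · obtain ⟨t, ht⟩ := exists_above σ (A ∪ B)
      refine ⟨t, fun x hx => (ht x hx).ne, ?_⟩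
      rw [Finset.filter_false_of_mem (fun x hx => not_lt.2 (le_of_lt (ht x (Finset.mem_union_left _ hx)))),
          Finset.filter_true_of_mem (fun x hx => ht x (Finset.mem_union_right _ hx))]
      simp [hcB]
    -- now min < c < max
    have hbound : min A.card B.card < c ∧ c < max A.card B.card := by
      rcases min_choice A.card B.card with h | h <;> rcases max_choice A.card B.card with h' | h' <;> omega
    have hne : (A ∪ B).Nonempty := by
      rcases (A ∪ B).eq_empty_or_nonempty with h | h
      · rw [Finset.union_eq_empty] at h
        obtain ⟨rfl, rfl⟩ := h
        simp at hbound
      · exact h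
    obtain ⟨xmin, hxminmem, hxminle⟩ := Finset.exists_min_image (A ∪ B) σ hne
    obtain ⟨xmax, hxmaxmem, hxmaxle⟩ := Finset.exists_max_image (A ∪ B) σ hne
    have hstrictmin : ∀ x ∈ A ∪ B, x ≠ xmin → σ xmin < σ x := fun x hx hne' =>
      (hxminle x hx).lt_of_ne (fun h => hne' (hinj (Finset.mem_coe.2 hx) (Finset.mem_coe.2 hxminmem) h.symm))
    have hstrictmax : ∀ x ∈ A ∪ B, x ≠ xmax → σ x < σ xmax := fun x hx hne' =>
      (hxmaxle x hx).lt_of_ne (fun h => hne' (hinj (Finset.mem_coe.2 hx) (Finset.mem_coe.2 hxmaxmem) h))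
    rcases Finset.mem_union.1 hxminmem with hAmin | hBmin
    · -- xmin ∈ A
      have hxminB : xmin ∉ B := Finset.disjoint_left.1 hdisj hAmin
      have hcardA : 1 ≤ A.card := Finset.card_pos.2 ⟨xmin, hAmin⟩
      have hA'card : (A.erase xmin).card = A.card - 1 := Finset.card_erase_of_mem hAmin
      have hU : A.erase xmin ∪ B = (A ∪ B).erase xmin := by
        rw [Finset.erase_union_distrib, Finset.erase_eq_of_notMem hxminB]
      have hUcard : (A.erase xmin ∪ B).card ≤ N := by
        rw [hU, Finset.card_erase_of_mem hxminmem]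
        have := Finset.card_pos.2 hne
        omega
      have hsub : A.erase xmin ∪ B ⊆ A ∪ B := by
        rw [hU]; exact Finset.erase_subset _ _
      have hdisj' : Disjoint (A.erase xmin) B := hdisj.mono_left (Finset.erase_subset _ _)
      have hinj' : Set.InjOn σ ((A.erase xmin ∪ B : Finset Pt) : Set Pt) :=
        hinj.mono (by exact_mod_cast hsub)
      obtain ⟨t', havoid', hval'⟩ := ih (A.erase xmin) B hUcard hdisj' hinj' c (by omega) (by omega)
      by_cases hts : σ xmin < t'
      · refine ⟨t', ?_, ?_⟩
        · intro x hx
          by_cases hxx : x = xmin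
          · subst hxx; exact hts.ne
          · exact havoid' x (by rw [hU]; exact Finset.mem_erase.2 ⟨hxx, hx⟩)
        · rw [← filter_erase_of_not (P := fun x => t' < σ x) A (not_lt.2 hts.le)]
          exact hval'
      · push_neg at hts
        have hall : ∀ x ∈ A.erase xmin ∪ B, t' < σ x := by
          intro x hx
          have h1 := hstrictmin x (hsub hx) (by rw [hU] at hx; exact (Finset.mem_erase.1 hx).1)
          linarith
        have hc' : c = (A.erase xmin).card := by
          rw [Finset.filter_true_of_mem (fun x hx => hall x (Finset.mem_union_left _ hx)),
              Finset.filter_false_of_mem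
                (fun x hx => not_lt.2 (le_of_lt (hall x (Finset.mem_union_right _ hx))))] at hval'
          simpa using hval'.symm
        obtain ⟨t, ht1, ht2⟩ := exists_between_left σ (A.erase xmin ∪ B) (σ xmin)
          (fun x hx => hstrictmin x (hsub hx) (by rw [hU] at hx; exact (Finset.mem_erase.1 hx).1))
        refine ⟨t, ?_, ?_⟩
        · intro x hx
          by_cases hxx : x = xmin
          · subst hxx; exact ht1.ne
          · exact (ht2 x (by rw [hU]; exact Finset.mem_erase.2 ⟨hxx, hx⟩)).ne'
        · rw [← filter_erase_of_not (P := fun x => t < σ x) A (not_lt.2 ht1.le),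
              Finset.filter_true_of_mem (fun x hx => ht2 x (Finset.mem_union_left _ hx)),
              Finset.filter_false_of_mem
                (fun x hx => not_lt.2 (le_of_lt (ht2 x (Finset.mem_union_right _ hx))))]
          simp [hc']
    rcases Finset.mem_union.1 hxmaxmem with hAmax | hBmax
    swap
    · -- xmax ∈ B
      have hxmaxA : xmax ∉ A := Finset.disjoint_right.1 hdisj hBmax
      have hcardB : 1 ≤ B.card := Finset.card_pos.2 ⟨xmax, hBmax⟩
      have hB'card : (B.erase xmax).card = B.card - 1 := Finset.card_erase_of_mem hBmax
      have hU : A ∪ B.erase xmax = (A ∪ B).erase xmax := by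
        rw [Finset.erase_union_distrib, Finset.erase_eq_of_notMem hxmaxA]
      have hUcard : (A ∪ B.erase xmax).card ≤ N := by
        rw [hU, Finset.card_erase_of_mem hxmaxmem]
        have := Finset.card_pos.2 hne
        omega
      have hsub : A ∪ B.erase xmax ⊆ A ∪ B := by
        rw [hU]; exact Finset.erase_subset _ _
      have hdisj' : Disjoint A (B.erase xmax) := hdisj.mono_right (Finset.erase_subset _ _)
      have hinj' : Set.InjOn σ ((A ∪ B.erase xmax : Finset Pt) : Set Pt) :=
        hinj.mono (by exact_mod_cast hsub)
      obtain ⟨t', havoid', hval'⟩ := ih A (B.erase xmax) hUcard hdisj' hinj' c (by omega) (by omega)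
      by_cases hts : t' < σ xmax
      · refine ⟨t', ?_, ?_⟩
        · intro x hx
          by_cases hxx : x = xmax
          · subst hxx; exact hts.ne'
          · exact havoid' x (by rw [hU]; exact Finset.mem_erase.2 ⟨hxx, hx⟩)
        · rw [← filter_erase_of_not (P := fun x => σ x < t') B (not_lt.2 hts.le)]
          exact hval'
      · push_neg at hts
        have hall : ∀ x ∈ A ∪ B.erase xmax, σ x < t' := by
          intro x hx
          have h1 := hstrictmax x (hsub hx) (by rw [hU] at hx; exact (Finset.mem_erase.1 hx).1)
          linarith
        have hc' : c = (B.erase xmax).card := by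
          rw [Finset.filter_false_of_mem
                (fun x hx => not_lt.2 (le_of_lt (hall x (Finset.mem_union_left _ hx)))),
              Finset.filter_true_of_mem (fun x hx => hall x (Finset.mem_union_right _ hx))] at hval'
          simpa using hval'.symm
        obtain ⟨t, ht1, ht2⟩ := exists_between_right σ (A ∪ B.erase xmax) (σ xmax)
          (fun x hx => hstrictmax x (hsub hx) (by rw [hU] at hx; exact (Finset.mem_erase.1 hx).1))
        refine ⟨t, ?_, ?_⟩
        · intro x hx
          by_cases hxx : x = xmax
          · subst hxx; exact ht1.ne'
          · exact (ht2 x (by rw [hU]; exact Finset.mem_erase.2 ⟨hxx, hx⟩)).ne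
        · rw [← filter_erase_of_not (P := fun x => σ x < t) B (not_lt.2 ht1.le),
              Finset.filter_false_of_mem
                (fun x hx => not_lt.2 (le_of_lt (ht2 x (Finset.mem_union_left _ hx)))),
              Finset.filter_true_of_mem (fun x hx => ht2 x (Finset.mem_union_right _ hx))]
          simp [hc']
    · -- xmin ∈ B, xmax ∈ A
      have hxminA : xmin ∉ A := Finset.disjoint_right.1 hdisj hBmin
      have hxmaxB : xmax ∉ B := Finset.disjoint_left.1 hdisj hAmax
      have hminmax : xmin ≠ xmax := fun h => hxmaxB (h ▸ hBmin)
      have hcardA : 1 ≤ A.card := Finset.card_pos.2 ⟨xmax, hAmax⟩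
      have hcardB : 1 ≤ B.card := Finset.card_pos.2 ⟨xmin, hBmin⟩
      have hA'card : (A.erase xmax).card = A.card - 1 := Finset.card_erase_of_mem hAmax
      have hB'card : (B.erase xmin).card = B.card - 1 := Finset.card_erase_of_mem hBmin
      have hsmm : σ xmin < σ xmax := hstrictmin xmax hxmaxmem (Ne.symm hminmax)
      have hABcard : (A ∪ B).card = A.card + B.card := Finset.card_union_of_disjoint hdisj
      have hdisj' : Disjoint (A.erase xmax) (B.erase xmin) :=
        (hdisj.mono_left (Finset.erase_subset _ _)).mono_right (Finset.erase_subset _ _)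
      have hA'B'card : (A.erase xmax ∪ B.erase xmin).card = A.card + B.card - 2 := by
        rw [Finset.card_union_of_disjoint hdisj']
        omega
      have hsub : A.erase xmax ∪ B.erase xmin ⊆ A ∪ B :=
        Finset.union_subset_union (Finset.erase_subset _ _) (Finset.erase_subset _ _)
      have hinj' : Set.InjOn σ ((A.erase xmax ∪ B.erase xmin : Finset Pt) : Set Pt) :=
        hinj.mono (by exact_mod_cast hsub)
      have hmemAB : ∀ x ∈ A.erase xmax ∪ B.erase xmin, x ≠ xmin ∧ x ≠ xmax := by
        intro x hx
        rcases Finset.mem_union.1 hx with h | h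
        · exact ⟨fun e => hxminA (e ▸ Finset.mem_of_mem_erase h), (Finset.mem_erase.1 h).1⟩
        · exact ⟨(Finset.mem_erase.1 h).1, fun e => hxmaxB (e ▸ Finset.mem_of_mem_erase h)⟩
      have hc2' : 2 ≤ c := by omega
      obtain ⟨t'', havoid'', hval''⟩ := ih (A.erase xmax) (B.erase xmin)
        (by omega) hdisj' hinj' (c - 2) (by omega) (by omega)
      by_cases h1 : σ xmin < t''
      · by_cases h2 : t'' < σ xmax
        · refine ⟨t'', ?_, ?_⟩
          · intro x hx
            by_cases e1 : x = xmin
            · subst e1; exact h1.ne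
            by_cases e2 : x = xmax
            · subst e2; exact h2.ne'
            rcases Finset.mem_union.1 hx with h | h
            · exact havoid'' x (Finset.mem_union_left _ (Finset.mem_erase.2 ⟨e2, h⟩))
            · exact havoid'' x (Finset.mem_union_right _ (Finset.mem_erase.2 ⟨e1, h⟩))
          · have hA2 := filter_erase_card (P := fun x => t'' < σ x) hAmax h2
            have hB2 := filter_erase_card (P := fun x => σ x < t'') hBmin h1
            omega
        · push_neg at h2
          have hall : ∀ x ∈ A.erase xmax ∪ B.erase xmin, σ x < t'' := fun x hx =>
            lt_of_lt_of_le (hstrictmax x (hsub hx) (hmemAB x hx).2) h2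
          have hc' : c - 2 = (B.erase xmin).card := by
            rw [Finset.filter_false_of_mem
                  (fun x hx => not_lt.2 (le_of_lt (hall x (Finset.mem_union_left _ hx)))),
                Finset.filter_true_of_mem (fun x hx => hall x (Finset.mem_union_right _ hx))] at hval''
            simpa using hval''.symm
          obtain ⟨t, ht1, ht2⟩ := exists_between_right σ ((A ∪ B).erase xmax) (σ xmax)
            (fun x hx => hstrictmax x (Finset.mem_of_mem_erase hx) (Finset.mem_erase.1 hx).1)
          refine ⟨t, ?_, ?_⟩
          · intro x hx
            by_cases e2 : x = xmax
            · subst e2; exact ht1.ne'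
            · exact (ht2 x (Finset.mem_erase.2 ⟨e2, hx⟩)).ne
          · have hAfil : A.filter (fun x => t < σ x) = {xmax} :=
              filter_eq_singleton hAmax ht1 (fun x hx hne' => not_lt.2
                (le_of_lt (ht2 x (Finset.mem_erase.2 ⟨hne', Finset.mem_union_left _ hx⟩))))
            have hBfil : B.filter (fun x => σ x < t) = B :=
              Finset.filter_true_of_mem (fun x hx => ht2 x (Finset.mem_erase.2
                ⟨fun e => hxmaxB (e ▸ hx), Finset.mem_union_right _ hx⟩))
            rw [hAfil, hBfil]
            simp only [Finset.card_singleton]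
            omega
      · push_neg at h1
        have hall : ∀ x ∈ A.erase xmax ∪ B.erase xmin, t'' < σ x := fun x hx =>
          lt_of_le_of_lt h1 (hstrictmin x (hsub hx) (hmemAB x hx).1)
        have hc' : c - 2 = (A.erase xmax).card := by
          rw [Finset.filter_true_of_mem (fun x hx => hall x (Finset.mem_union_left _ hx)),
              Finset.filter_false_of_mem
                (fun x hx => not_lt.2 (le_of_lt (hall x (Finset.mem_union_right _ hx))))] at hval''
          simpa using hval''.symm
        obtain ⟨t, ht1, ht2⟩ := exists_between_left σ ((A ∪ B).erase xmin) (σ xmin)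
          (fun x hx => hstrictmin x (Finset.mem_of_mem_erase hx) (Finset.mem_erase.1 hx).1)
        refine ⟨t, ?_, ?_⟩
        · intro x hx
          by_cases e1 : x = xmin
          · subst e1; exact ht1.ne
          · exact (ht2 x (Finset.mem_erase.2 ⟨e1, hx⟩)).ne'
        · have hAfil : A.filter (fun x => t < σ x) = A :=
            Finset.filter_true_of_mem (fun x hx => ht2 x (Finset.mem_erase.2
              ⟨fun e => hxminA (e ▸ hx), Finset.mem_union_left _ hx⟩))
          have hBfil : B.filter (fun x => σ x < t) = {xmin} :=
            filter_eq_singleton hBmin ht1 (fun x hx hne' => not_lt.2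
              (le_of_lt (ht2 x (Finset.mem_erase.2 ⟨hne', Finset.mem_union_right _ hx⟩))))
          rw [hAfil, hBfil]
          simp only [Finset.card_singleton]
          omega


lemma collinear_triple (p x y v : Pt) (hx : ∃ r : ℝ, x = r • v + p)
    (hy : ∃ r : ℝ, y = r • v + p) : Collinear ℝ ({p, x, y} : Set Pt) := by
  rw [collinear_iff_of_mem (Set.mem_insert p _)]
  refine ⟨v, ?_⟩
  intro q hq
  simp only [Set.mem_insert_iff, Set.mem_singleton_iff] at hq
  rcases hq with rfl | rfl | rfl
  · exact ⟨0, by simp⟩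
  · obtain ⟨r, hr⟩ := hx; exact ⟨r, by simp [hr]⟩
  · obtain ⟨r, hr⟩ := hy; exact ⟨r, by simp [hr]⟩

lemma exists_halving_dir (S : Finset Pt) (hgp : GenPos S) (hodd : Odd S.card)
    {p : Pt} (hp : p ∈ S) :
    ∃ t : ℝ, (∀ x ∈ S, x ≠ p → x.2 - p.2 - t * (x.1 - p.1) ≠ 0) ∧
      (S.filter fun x => 0 < x.2 - p.2 - t * (x.1 - p.1)).card =
        (S.filter fun x => x.2 - p.2 - t * (x.1 - p.1) < 0).card := by
  set T := S.erase p with hT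
  set σ : Pt → ℝ := fun x => (x.2 - p.2) / (x.1 - p.1) with hσ
  set A := T.filter (fun x => p.1 < x.1) with hA
  set B := T.filter (fun x => x.1 < p.1) with hB
  set Cp := T.filter (fun x => x.1 = p.1 ∧ p.2 < x.2) with hCp
  set Cm := T.filter (fun x => x.1 = p.1 ∧ x.2 < p.2) with hCm
  have hTm : ∀ x ∈ T, x ∈ S ∧ x ≠ p := by
    intro x hx
    exact ⟨Finset.mem_of_mem_erase hx, (Finset.mem_erase.1 hx).1⟩
  have hdecomp : T = (A ∪ B) ∪ (Cp ∪ Cm) := by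
    ext x
    simp only [hA, hB, hCp, hCm, Finset.mem_union, Finset.mem_filter]
    constructor
    · intro hx
      have hxp : x ≠ p := (Finset.mem_erase.1 hx).1
      rcases lt_trichotomy p.1 x.1 with h | h | h
      · exact Or.inl (Or.inl ⟨hx, h⟩)
      · rcases lt_trichotomy p.2 x.2 with h2 | h2 | h2
        · exact Or.inr (Or.inl ⟨hx, h.symm, h2⟩)
        · exact absurd (Prod.ext h.symm h2.symm) hxp
        · exact Or.inr (Or.inr ⟨hx, h.symm, h2⟩)
      · exact Or.inl (Or.inr ⟨hx, h⟩)
    · rintro ((⟨hx, _⟩ | ⟨hx, _⟩) | (⟨hx, _⟩ | ⟨hx, _⟩)) <;> exact hx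
  have dAB : Disjoint A B := by
    rw [Finset.disjoint_left]
    intro x hx hx'
    have h1 := (Finset.mem_filter.1 hx).2
    have h2 := (Finset.mem_filter.1 hx').2
    linarith
  have dCpCm : Disjoint Cp Cm := by
    rw [Finset.disjoint_left]
    intro x hx hx'
    have h1 := (Finset.mem_filter.1 hx).2.2
    have h2 := (Finset.mem_filter.1 hx').2.2
    linarith
  have dABC : Disjoint (A ∪ B) (Cp ∪ Cm) := by
    rw [Finset.disjoint_left]
    intro x hx hx'
    rcases Finset.mem_union.1 hx with h | h <;> rcases Finset.mem_union.1 hx' with h' | h' <;>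
      [skip; skip; skip; skip] <;>
    · have h1 := (Finset.mem_filter.1 h).2
      have h2 := (Finset.mem_filter.1 h').2.1
      rw [h2] at h1
      exact lt_irrefl _ h1
  -- A ∪ B consists of points with x.1 ≠ p.1
  have hABne : ∀ x ∈ A ∪ B, x ∈ T ∧ x.1 ≠ p.1 := by
    intro x hx
    rcases Finset.mem_union.1 hx with h | h
    · exact ⟨(Finset.mem_filter.1 h).1, ((Finset.mem_filter.1 h).2).ne'⟩
    · exact ⟨(Finset.mem_filter.1 h).1, ((Finset.mem_filter.1 h).2).ne⟩
  have hinj : Set.InjOn σ ((A ∪ B : Finset Pt) : Set Pt) := by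
    intro x hx y hy heq
    by_contra hne
    obtain ⟨hxT, hx1⟩ := hABne x (Finset.mem_coe.1 hx)
    obtain ⟨hyT, hy1⟩ := hABne y (Finset.mem_coe.1 hy)
    have hx1' : x.1 - p.1 ≠ 0 := sub_ne_zero.2 hx1
    have hy1' : y.1 - p.1 ≠ 0 := sub_ne_zero.2 hy1
    have hcross : (x.2 - p.2) * (y.1 - p.1) = (y.2 - p.2) * (x.1 - p.1) :=
      (div_eq_div_iff hx1' hy1').1 heq
    have hcol : Collinear ℝ ({p, x, y} : Set Pt) := by
      apply collinear_triple p x y (x - p)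
      · exact ⟨1, by simp⟩
      · refine ⟨(y.1 - p.1) / (x.1 - p.1), ?_⟩
        apply Prod.ext
        · simp only [Prod.fst_add, Prod.smul_fst, Prod.fst_sub, smul_eq_mul]
          field_simp
          ring
        · simp only [Prod.snd_add, Prod.smul_snd, Prod.snd_sub, smul_eq_mul]
          field_simp
          linear_combination -hcross
    exact hgp p hp x (hTm x hxT).1 y (hTm y hyT).1
      (Ne.symm (hTm x hxT).2) (Ne.symm (hTm y hyT).2) hne hcol
  have hvert : (Cp ∪ Cm).card ≤ 1 := by
    rw [Finset.card_le_one]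
    intro x hx y hy
    by_contra hne
    have hx1 : x.1 = p.1 := by
      rcases Finset.mem_union.1 hx with h | h <;> exact (Finset.mem_filter.1 h).2.1
    have hy1 : y.1 = p.1 := by
      rcases Finset.mem_union.1 hy with h | h <;> exact (Finset.mem_filter.1 h).2.1
    have hxT : x ∈ T := by
      rcases Finset.mem_union.1 hx with h | h <;> exact (Finset.mem_filter.1 h).1
    have hyT : y ∈ T := by
      rcases Finset.mem_union.1 hy with h | h <;> exact (Finset.mem_filter.1 h).1
    have hcol : Collinear ℝ ({p, x, y} : Set Pt) := by
      apply collinear_triple p x y ((0 : ℝ), (1 : ℝ))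
      · refine ⟨x.2 - p.2, ?_⟩
        apply Prod.ext <;>
          simp [hx1]
      · refine ⟨y.2 - p.2, ?_⟩
        apply Prod.ext <;>
          simp [hy1]
    exact hgp p hp x (hTm x hxT).1 y (hTm y hyT).1
      (Ne.symm (hTm x hxT).2) (Ne.symm (hTm y hyT).2) hne hcol
  have hcardsum : (A ∪ B).card + (Cp ∪ Cm).card = T.card := by
    rw [← Finset.card_union_of_disjoint dABC, ← hdecomp]
  have hcardAB : A.card + B.card = (A ∪ B).card := (Finset.card_union_of_disjoint dAB).symm
  have hcardC : Cp.card + Cm.card = (Cp ∪ Cm).card := (Finset.card_union_of_disjoint dCpCm).symm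
  have hTcard : T.card + 1 = S.card := by
    rw [hT, Finset.card_erase_of_mem hp]
    have : 1 ≤ S.card := Finset.card_pos.2 ⟨p, hp⟩
    omega
  obtain ⟨k, hk⟩ := hodd
  obtain ⟨c, hc, hc1, hc2⟩ :
      ∃ c : ℕ, 2 * c + Cp.card = A.card + B.card + Cm.card ∧
        min A.card B.card ≤ c ∧ c ≤ max A.card B.card := by
    refine ⟨(A.card + B.card + Cm.card - Cp.card) / 2, ?_, ?_, ?_⟩ <;> omega
  obtain ⟨t, havoid, hval⟩ := sweep σ (A ∪ B).card A B le_rfl dAB hinj c hc1 hc2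
  refine ⟨t, ?_, ?_⟩
  · -- no other point of S on the line
    intro x hxS hxp
    have hxT : x ∈ T := Finset.mem_erase.2 ⟨hxp, hxS⟩
    rw [hdecomp] at hxT
    rcases Finset.mem_union.1 hxT with hx | hx
    · obtain ⟨_, hx1⟩ := hABne x hx
      intro h0
      apply havoid x hx
      show (x.2 - p.2) / (x.1 - p.1) = t
      rw [show x.2 - p.2 = t * (x.1 - p.1) by linarith]
      exact mul_div_cancel_right₀ t (sub_ne_zero.2 hx1)
    · have hx1 : x.1 = p.1 := by
        rcases Finset.mem_union.1 hx with h | h <;> exact (Finset.mem_filter.1 h).2.1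
      have hx2 : x.2 ≠ p.2 := by
        rcases Finset.mem_union.1 hx with h | h
        · exact ((Finset.mem_filter.1 h).2.2).ne'
        · exact ((Finset.mem_filter.1 h).2.2).ne
      rw [hx1]
      simp only [sub_self, mul_zero, sub_zero]
      exact sub_ne_zero.2 hx2
  · -- count equality
    rw [← filter_erase_of_not (P := fun x => 0 < x.2 - p.2 - t * (x.1 - p.1)) (a := p) S (by simp),
        ← filter_erase_of_not (P := fun x => x.2 - p.2 - t * (x.1 - p.1) < 0) (a := p) S (by simp)]
    rw [← hT]
    have eA1 : A.filter (fun x => 0 < x.2 - p.2 - t * (x.1 - p.1)) =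
        A.filter (fun x => t < σ x) := by
      refine Finset.filter_congr (fun x hx => ?_)
      have hx1 : p.1 < x.1 := (Finset.mem_filter.1 hx).2
      have hpos : (0:ℝ) < x.1 - p.1 := by linarith
      show _ ↔ t < (x.2 - p.2) / (x.1 - p.1)
      rw [lt_div_iff₀ hpos]
      constructor <;> intro <;> linarith
    have eB1 : B.filter (fun x => 0 < x.2 - p.2 - t * (x.1 - p.1)) =
        B.filter (fun x => σ x < t) := by
      refine Finset.filter_congr (fun x hx => ?_)
      have hx1 : x.1 < p.1 := (Finset.mem_filter.1 hx).2
      have hneg : x.1 - p.1 < (0:ℝ) := by linarith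
      show _ ↔ (x.2 - p.2) / (x.1 - p.1) < t
      rw [div_lt_iff_of_neg hneg]
      constructor <;> intro <;> linarith
    have eC1 : Cp.filter (fun x => 0 < x.2 - p.2 - t * (x.1 - p.1)) = Cp := by
      refine Finset.filter_true_of_mem (fun x hx => ?_)
      obtain ⟨-, he, hlt⟩ := Finset.mem_filter.1 hx
      have h0 : x.1 - p.1 = 0 := by rw [he]; ring
      rw [h0]
      simpa using hlt
    have eD1 : Cm.filter (fun x => 0 < x.2 - p.2 - t * (x.1 - p.1)) = ∅ := by
      refine Finset.filter_false_of_mem (fun x hx => ?_)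
      obtain ⟨-, he, hlt⟩ := Finset.mem_filter.1 hx
      have h0 : x.1 - p.1 = 0 := by rw [he]; ring
      rw [h0]
      simp only [mul_zero, sub_zero, not_lt]
      linarith
    have eA2 : A.filter (fun x => x.2 - p.2 - t * (x.1 - p.1) < 0) =
        A.filter (fun x => σ x < t) := by
      refine Finset.filter_congr (fun x hx => ?_)
      have hx1 : p.1 < x.1 := (Finset.mem_filter.1 hx).2
      have hpos : (0:ℝ) < x.1 - p.1 := by linarith
      show _ ↔ (x.2 - p.2) / (x.1 - p.1) < t
      rw [div_lt_iff₀ hpos]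
      constructor <;> intro <;> linarith
    have eB2 : B.filter (fun x => x.2 - p.2 - t * (x.1 - p.1) < 0) =
        B.filter (fun x => t < σ x) := by
      refine Finset.filter_congr (fun x hx => ?_)
      have hx1 : x.1 < p.1 := (Finset.mem_filter.1 hx).2
      have hneg : x.1 - p.1 < (0:ℝ) := by linarith
      show _ ↔ t < (x.2 - p.2) / (x.1 - p.1)
      rw [lt_div_iff_of_neg hneg]
      constructor <;> intro <;> linarith
    have eC2 : Cp.filter (fun x => x.2 - p.2 - t * (x.1 - p.1) < 0) = ∅ := by
      refine Finset.filter_false_of_mem (fun x hx => ?_)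
      obtain ⟨-, he, hlt⟩ := Finset.mem_filter.1 hx
      have h0 : x.1 - p.1 = 0 := by rw [he]; ring
      rw [h0]
      simp only [mul_zero, sub_zero, not_lt]
      linarith
    have eD2 : Cm.filter (fun x => x.2 - p.2 - t * (x.1 - p.1) < 0) = Cm := by
      refine Finset.filter_true_of_mem (fun x hx => ?_)
      obtain ⟨-, he, hlt⟩ := Finset.mem_filter.1 hx
      have h0 : x.1 - p.1 = 0 := by rw [he]; ring
      rw [h0]
      simpa using hlt
    have hAcomp : (A.filter (fun x => t < σ x)).card + (A.filter (fun x => σ x < t)).card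
        = A.card := by
      have h0 := Finset.card_filter_add_card_filter_not
        (s := A) (p := fun x => t < σ x)
      have hcg : A.filter (fun x => ¬ t < σ x) = A.filter (fun x => σ x < t) := by
        refine Finset.filter_congr (fun x hx => ?_)
        have hne := havoid x (Finset.mem_union_left _ hx)
        constructor
        · intro h; exact lt_of_le_of_ne (not_lt.1 h) hne
        · intro h; exact not_lt.2 h.le
      rw [hcg] at h0
      exact h0
    have hBcomp : (B.filter (fun x => t < σ x)).card + (B.filter (fun x => σ x < t)).card
        = B.card := by
      have h0 := Finset.card_filter_add_card_filter_not
        (s := B) (p := fun x => σ x < t)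
      have hcg : B.filter (fun x => ¬ σ x < t) = B.filter (fun x => t < σ x) := by
        refine Finset.filter_congr (fun x hx => ?_)
        have hne := havoid x (Finset.mem_union_right _ hx)
        constructor
        · intro h; exact lt_of_le_of_ne (not_lt.1 h) hne.symm
        · intro h; exact not_lt.2 h.le
      rw [hcg] at h0
      omega
    simp only [hdecomp, Finset.filter_union]
    rw [eA1, eB1, eC1, eD1, eA2, eB2, eC2, eD2, Finset.union_empty, Finset.empty_union]
    have dL : Disjoint (A.filter (fun x => t < σ x) ∪ B.filter (fun x => σ x < t)) Cp :=
      dABC.mono (Finset.union_subset_union (Finset.filter_subset _ _) (Finset.filter_subset _ _))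
        Finset.subset_union_left
    have dR : Disjoint (A.filter (fun x => σ x < t) ∪ B.filter (fun x => t < σ x)) Cm :=
      dABC.mono (Finset.union_subset_union (Finset.filter_subset _ _) (Finset.filter_subset _ _))
        Finset.subset_union_right
    rw [Finset.card_union_of_disjoint dL, Finset.card_union_of_disjoint dR,
        Finset.card_union_of_disjoint (Finset.disjoint_filter_filter dAB),
        Finset.card_union_of_disjoint (Finset.disjoint_filter_filter dAB)]
    omega

/-- Every set of an odd number of points in general position admits a halving
matching. -/
theorem odd_card_hasHalvingMatching (S : Finset Pt)
    (hgp : GenPos S) (hodd : Odd S.card) :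
    HasHalvingMatching S := by
  have key := fun (p : Pt) (hp : p ∈ S) => exists_halving_dir S hgp hodd hp
  choose! t ht1 ht2 using key
  refine ⟨fun p => lineThrough p (1, t p), fun p hp => ⟨?_, ?_⟩, ?_⟩
  · refine ⟨p, (1, t p), ?_, rfl, ⟨p, hp, ?_⟩, ?_⟩
    · intro h
      have := congrArg Prod.fst h
      simp at this
    · show det2 (1, t p) (p - p) = 0
      simp [det2]
    · have e1 : {x ∈ (S : Set Pt) | 0 < det2 (1, t p) (x - p)} =
          ↑(S.filter fun x => 0 < x.2 - p.2 - t p * (x.1 - p.1)) := by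
        ext x
        simp only [Set.mem_setOf_eq, Finset.coe_filter, det2, Prod.fst_sub, Prod.snd_sub,
          one_mul, Finset.mem_coe]
      have e2 : {x ∈ (S : Set Pt) | det2 (1, t p) (x - p) < 0} =
          ↑(S.filter fun x => x.2 - p.2 - t p * (x.1 - p.1) < 0) := by
        ext x
        simp only [Set.mem_setOf_eq, Finset.coe_filter, det2, Prod.fst_sub, Prod.snd_sub,
          one_mul, Finset.mem_coe]
      rw [e1, e2, Set.ncard_coe_finset, Set.ncard_coe_finset]
      exact ht2 p hp
  · show det2 (1, t p) (p - p) = 0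
    simp [det2]
  · intro p hp q hq hpq heq
    have hq' : det2 (1, t p) (q - p) = 0 := by
      have heq' : lineThrough p (1, t p) = lineThrough q (1, t q) := heq
      have hmem : q ∈ lineThrough p (1, t p) := by
        rw [heq']
        show det2 (1, t q) (q - q) = 0
        simp [det2]
      exact hmem
    apply ht1 p hp q hq hpq.symm
    have h2 : (1:ℝ) * (q.2 - p.2) - t p * (q.1 - p.1) = 0 := by
      simpa [det2] using hq'
    linarith
end
end

section
/- There exists a set S of 4 points in general position in the plane that admits no halving matching. -/
open Filter Set

noncomputable section

/- ### Auxiliary material -/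

lemma det2_smul_left (c : ℝ) (u w : Pt) : det2 (c • u) w = c * det2 u w := by
  simp [det2, Prod.smul_fst, Prod.smul_snd, smul_eq_mul]; ring

lemma det2_shift (v x a p : Pt) : det2 v (x - a) = det2 v (x - p) + det2 v (p - a) := by
  simp [det2, Prod.fst_sub, Prod.snd_sub]; ring

lemma parallel {v u : Pt} (hv : v ≠ 0) (hu : u ≠ 0) (h : det2 v u = 0) :
    ∃ c : ℝ, c ≠ 0 ∧ v = c • u := by
  rcases eq_or_ne u.1 0 with h1 | h1
  · have h2 : u.2 ≠ 0 := by
      intro h2; exact hu (Prod.ext h1 h2)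
    refine ⟨v.2 / u.2, ?_, ?_⟩
    · intro hc
      have hv2 : v.2 = 0 := by field_simp at hc; simpa using hc
      have hv1 : v.1 = 0 := by
        have := h; simp [det2, h1, hv2] at this
        rcases this with h' | h' <;> [exact h'; exact absurd h' h2]
      exact hv (Prod.ext hv1 hv2)
    · have : v.1 * u.2 = v.2 * u.1 := by simpa [det2, sub_eq_zero] using h
      apply Prod.ext <;> simp [Prod.smul_fst, Prod.smul_snd, smul_eq_mul] <;>
        field_simp <;> linarith [this]
  · refine ⟨v.1 / u.1, ?_, ?_⟩
    · intro hc
      have hv1 : v.1 = 0 := by field_simp at hc; simpa using hc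
      have hv2 : v.2 = 0 := by
        have : v.1 * u.2 = v.2 * u.1 := by simpa [det2, sub_eq_zero] using h
        rw [hv1] at this; simp at this
        rcases this with h' | h' <;> [exact h'; exact absurd h' h1]
      exact hv (Prod.ext hv1 hv2)
    · have : v.1 * u.2 = v.2 * u.1 := by simpa [det2, sub_eq_zero] using h
      apply Prod.ext <;> simp [Prod.smul_fst, Prod.smul_snd, smul_eq_mul] <;>
        field_simp <;> nlinarith [this]

lemma line_two_points {p q a v : Pt} (hv : v ≠ 0) (hp : det2 v (p - a) = 0)
    (hq : det2 v (q - a) = 0) (hpq : p ≠ q) :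
    lineThrough a v = lineThrough p (q - p) := by
  have hqp : det2 v (q - p) = 0 := by
    have := det2_shift v q a p
    rw [hq, hp] at this; linarith [this]
  have hqp0 : q - p ≠ 0 := sub_ne_zero.mpr (Ne.symm hpq)
  obtain ⟨c, hc, hvc⟩ := parallel hv hqp0 hqp
  ext x
  simp only [lineThrough, Set.mem_setOf_eq]
  rw [det2_shift v x a p, hp, add_zero, hvc, det2_smul_left]
  constructor
  · intro h; exact (mul_eq_zero.mp h).resolve_left hc
  · intro h; rw [h, mul_zero]

lemma ncard_filter (S : Finset Pt) (P : Pt → Prop) [DecidablePred P] :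
    Set.ncard {x ∈ (S : Set Pt) | P x} = (S.filter P).card := by
  rw [show {x ∈ (S : Set Pt) | P x} = ↑(S.filter P) by ext x; simp,
    Set.ncard_coe_finset]

lemma partition_card (S : Finset Pt) (f : Pt → ℝ) [DecidablePred fun x => 0 < f x]
    [DecidablePred fun x => f x < 0] [DecidablePred fun x => f x = 0] :
    (S.filter fun x => 0 < f x).card + (S.filter fun x => f x < 0).card
      + (S.filter fun x => f x = 0).card = S.card := by
  classical
  have h1 := Finset.card_filter_add_card_filter_not (s := S)
    (p := fun x => 0 < f x)
  have h2 : S.filter (fun x => ¬ 0 < f x) =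
      (S.filter fun x => f x < 0) ∪ (S.filter fun x => f x = 0) := by
    rw [← Finset.filter_or]
    apply Finset.filter_congr
    intro x _
    constructor
    · intro h
      rcases lt_or_eq_of_le (not_lt.mp h) with h' | h'
      · exact Or.inl h'
      · exact Or.inr h'
    · intro h
      rcases h with h | h
      · exact not_lt.mpr h.le
      · rw [h]; exact lt_irrefl 0
  have h3 : Disjoint (S.filter fun x => f x < 0) (S.filter fun x => f x = 0) := by
    apply Finset.disjoint_filter_filter'
    rw [disjoint_iff_inf_le]
    intro x hx
    simp only [Pi.inf_apply, inf_Prop_eq] at hx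
    exact absurd hx.2 (ne_of_lt hx.1)
  rw [h2, Finset.card_union_of_disjoint h3] at h1
  omega

lemma badpair (S : Finset Pt) (f : Pt → ℝ) [DecidablePred fun x => 0 < f x]
    [DecidablePred fun x => f x < 0]
    (hcnt : (S.filter fun x => 0 < f x).card = (S.filter fun x => f x < 0).card)
    (r : Pt) (hr : r ∈ S) (hfr : 0 < f r) (hnn : ∀ x ∈ S, 0 ≤ f x) : False := by
  have hneg : (S.filter fun x => f x < 0) = ∅ :=
    Finset.filter_eq_empty_iff.mpr fun x hx => not_lt.mpr (hnn x hx)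
  rw [hneg, Finset.card_empty, Finset.card_eq_zero] at hcnt
  exact absurd (Finset.mem_filter.mpr ⟨hr, hfr⟩) (by rw [hcnt]; exact Finset.notMem_empty r)

lemma badpair' (S : Finset Pt) (f : Pt → ℝ) [DecidablePred fun x => 0 < f x]
    [DecidablePred fun x => f x < 0]
    (hcnt : (S.filter fun x => 0 < f x).card = (S.filter fun x => f x < 0).card)
    (r : Pt) (hr : r ∈ S) (hfr : f r < 0) (hnn : ∀ x ∈ S, f x ≤ 0) : False := by
  have hpos : (S.filter fun x => 0 < f x) = ∅ :=
    Finset.filter_eq_empty_iff.mpr fun x hx => not_lt.mpr (hnn x hx)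
  rw [hpos, Finset.card_empty] at hcnt
  have := hcnt.symm
  rw [Finset.card_eq_zero] at this
  exact absurd (Finset.mem_filter.mpr ⟨hr, hfr⟩) (by rw [this]; exact Finset.notMem_empty r)

def pA : Pt := (0, 0)
def pB : Pt := (1, 0)
def pC : Pt := (0, 1)
def pD : Pt := (1/4, 1/4)

def S4 : Finset Pt := {pA, pB, pC, pD}

lemma mem_S4 (x : Pt) : x ∈ S4 ↔ x = pA ∨ x = pB ∨ x = pC ∨ x = pD := by
  simp [S4]

lemma card_S4 : S4.card = 4 := by
  rw [S4, Finset.card_insert_of_notMem, Finset.card_insert_of_notMem,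
    Finset.card_insert_of_notMem, Finset.card_singleton] <;>
    simp [pA, pB, pC, pD, Prod.ext_iff]

lemma collinear_det {a b c : Pt} (h : Collinear ℝ ({a, b, c} : Set Pt)) :
    det2 (b - a) (c - a) = 0 := by
  rw [collinear_iff_of_mem (show a ∈ ({a,b,c} : Set Pt) by simp)] at h
  obtain ⟨v, hv⟩ := h
  obtain ⟨rb, hb⟩ := hv b (by simp)
  obtain ⟨rc, hc⟩ := hv c (by simp)
  rw [hb, hc]
  simp [det2, Prod.smul_fst, Prod.smul_snd, Prod.fst_sub, Prod.snd_sub, smul_eq_mul]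
  ring

lemma genpos_S4 : GenPos S4 := by
  intro a ha b hb c hc h1 h2 h3 hcol
  have hd := collinear_det hcol
  rw [mem_S4] at ha hb hc
  rcases ha with rfl | rfl | rfl | rfl <;> rcases hb with rfl | rfl | rfl | rfl <;>
    rcases hc with rfl | rfl | rfl | rfl <;>
    first
      | exact h1 rfl
      | exact h2 rfl
      | exact h3 rfl
      | norm_num [det2, pA, pB, pC, pD, Prod.fst_sub, Prod.snd_sub] at hd

open Classical in
/-- A bad configuration: if a halving line of `S4` passes through two points `p, q` such
that all points of `S4` lie (weakly) on one side and some point `r` strictly, contradiction. -/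
lemma bad_generic {a v p q : Pt} (hv : v ≠ 0)
    (hcnt : (S4.filter fun x => 0 < det2 v (x - a)).card
      = (S4.filter fun x => det2 v (x - a) < 0).card)
    (hpf : det2 v (p - a) = 0) (hqf : det2 v (q - a) = 0) (hqp : q - p ≠ 0)
    (r : Pt) (hr : r ∈ S4) (hrpos : 0 < det2 (q - p) (r - p))
    (hall : ∀ x ∈ S4, 0 ≤ det2 (q - p) (x - p)) : False := by
  have hqd : det2 v (q - p) = 0 := by
    have := det2_shift v q a p
    rw [hqf, hpf] at this; linarith [this]
  obtain ⟨c, hc, hvc⟩ := parallel hv hqp hqd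
  have hval : ∀ x, det2 v (x - a) = c * det2 (q - p) (x - p) := by
    intro x
    rw [det2_shift v x a p, hpf, add_zero, hvc, det2_smul_left]
  rcases hc.lt_or_gt with hneg | hpos
  · refine badpair' S4 _ hcnt r hr ?_ ?_
    · rw [hval]; exact mul_neg_of_neg_of_pos hneg hrpos
    · intro x hx; rw [hval]; exact mul_nonpos_of_nonpos_of_nonneg hneg.le (hall x hx)
  · refine badpair S4 _ hcnt r hr ?_ ?_
    · rw [hval]; exact mul_pos hpos hrpos
    · intro x hx; rw [hval]; exact mul_nonneg hpos.le (hall x hx)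

lemma key {L : Set Pt} (hL : IsHalvingLine S4 L) :
    L = lineThrough pA (pD - pA) ∨ L = lineThrough pB (pD - pB) ∨
      L = lineThrough pC (pD - pC) := by
  classical
  obtain ⟨a, v, hv, hLeq, ⟨p, hpS, hpL⟩, hcnt⟩ := hL
  rw [ncard_filter, ncard_filter] at hcnt
  have hpf : det2 v (p - a) = 0 := by
    rw [hLeq] at hpL; simpa [lineThrough] using hpL
  have hpart := partition_card S4 (fun x => det2 v (x - a))
  rw [card_S4] at hpart
  have hp0 : p ∈ S4.filter (fun x => det2 v (x - a) = 0) :=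
    Finset.mem_filter.mpr ⟨hpS, hpf⟩
  have hcard1 : 1 ≤ (S4.filter (fun x => det2 v (x - a) = 0)).card :=
    Finset.card_pos.mpr ⟨p, hp0⟩
  have hcard2 : 1 < (S4.filter (fun x => det2 v (x - a) = 0)).card := by omega
  obtain ⟨z1, hz1, z2, hz2, hne⟩ := Finset.one_lt_card.mp hcard2
  obtain ⟨hz1S, hz1f⟩ := Finset.mem_filter.mp hz1
  obtain ⟨hz2S, hz2f⟩ := Finset.mem_filter.mp hz2
  have memA : pA ∈ S4 := by simp [S4]
  have memB : pB ∈ S4 := by simp [S4]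
  have memC : pC ∈ S4 := by simp [S4]
  have memD : pD ∈ S4 := by simp [S4]
  have hAD : pA ≠ pD := by simp [pA, pD, Prod.ext_iff]
  have hBD : pB ≠ pD := by simp [pB, pD, Prod.ext_iff]
  have hCD : pC ≠ pD := by simp [pC, pD, Prod.ext_iff]
  rw [mem_S4] at hz1S hz2S
  rcases hz1S with rfl | rfl | rfl | rfl <;> rcases hz2S with rfl | rfl | rfl | rfl
  · exact absurd rfl hne
  · -- zeros pA, pB : bad
    exact absurd (bad_generic hv hcnt hz1f hz2f
      (by simp [pA, pB, Prod.ext_iff]) pC memC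
      (by norm_num [det2, pA, pB, pC, Prod.fst_sub, Prod.snd_sub])
      (by intro x hx; rw [mem_S4] at hx
          rcases hx with rfl | rfl | rfl | rfl <;>
            norm_num [det2, pA, pB, pC, pD, Prod.fst_sub, Prod.snd_sub])) not_false
  · -- zeros pA, pC : bad
    exact absurd (bad_generic hv hcnt hz2f hz1f
      (by simp [pA, pC, Prod.ext_iff]) pB memB
      (by norm_num [det2, pA, pB, pC, Prod.fst_sub, Prod.snd_sub])
      (by intro x hx; rw [mem_S4] at hx
          rcases hx with rfl | rfl | rfl | rfl <;>
            norm_num [det2, pA, pB, pC, pD, Prod.fst_sub, Prod.snd_sub])) not_false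
  · exact Or.inl (by rw [hLeq]; exact line_two_points hv hz1f hz2f hAD)
  · exact absurd (bad_generic hv hcnt hz2f hz1f
      (by simp [pA, pB, Prod.ext_iff]) pC memC
      (by norm_num [det2, pA, pB, pC, Prod.fst_sub, Prod.snd_sub])
      (by intro x hx; rw [mem_S4] at hx
          rcases hx with rfl | rfl | rfl | rfl <;>
            norm_num [det2, pA, pB, pC, pD, Prod.fst_sub, Prod.snd_sub])) not_false
  · exact absurd rfl hne
  · -- zeros pB, pC : bad
    exact absurd (bad_generic hv hcnt hz1f hz2f
      (by simp [pB, pC, Prod.ext_iff]) pD memD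
      (by norm_num [det2, pB, pC, pD, Prod.fst_sub, Prod.snd_sub])
      (by intro x hx; rw [mem_S4] at hx
          rcases hx with rfl | rfl | rfl | rfl <;>
            norm_num [det2, pA, pB, pC, pD, Prod.fst_sub, Prod.snd_sub])) not_false
  · exact Or.inr (Or.inl (by rw [hLeq]; exact line_two_points hv hz1f hz2f hBD))
  · exact absurd (bad_generic hv hcnt hz1f hz2f
      (by simp [pA, pC, Prod.ext_iff]) pB memB
      (by norm_num [det2, pA, pB, pC, Prod.fst_sub, Prod.snd_sub])
      (by intro x hx; rw [mem_S4] at hx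
          rcases hx with rfl | rfl | rfl | rfl <;>
            norm_num [det2, pA, pB, pC, pD, Prod.fst_sub, Prod.snd_sub])) not_false
  · exact absurd (bad_generic hv hcnt hz2f hz1f
      (by simp [pB, pC, Prod.ext_iff]) pD memD
      (by norm_num [det2, pB, pC, pD, Prod.fst_sub, Prod.snd_sub])
      (by intro x hx; rw [mem_S4] at hx
          rcases hx with rfl | rfl | rfl | rfl <;>
            norm_num [det2, pA, pB, pC, pD, Prod.fst_sub, Prod.snd_sub])) not_false
  · exact absurd rfl hne
  · exact Or.inr (Or.inr (by rw [hLeq]; exact line_two_points hv hz1f hz2f hCD))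
  · exact Or.inl (by rw [hLeq]; exact line_two_points hv hz2f hz1f hAD)
  · exact Or.inr (Or.inl (by rw [hLeq]; exact line_two_points hv hz2f hz1f hBD))
  · exact Or.inr (Or.inr (by rw [hLeq]; exact line_two_points hv hz2f hz1f hCD))
  · exact absurd rfl hne

/-- There is a set of 4 points in general position with no halving matching. -/
theorem exists_four_points_no_halving_matching :
    ∃ S : Finset Pt, S.card = 4 ∧ GenPos S ∧ ¬ HasHalvingMatching S := by
  refine ⟨S4, card_S4, genpos_S4, ?_⟩
  rintro ⟨ℓ, h1, h2⟩
  have memA : pA ∈ S4 := by simp [S4]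
  have memB : pB ∈ S4 := by simp [S4]
  have memC : pC ∈ S4 := by simp [S4]
  have memD : pD ∈ S4 := by simp [S4]
  have eA : ℓ pA = lineThrough pA (pD - pA) := by
    rcases key (h1 pA memA).1 with h | h | h
    · exact h
    · exfalso
      have := (h1 pA memA).2
      rw [h] at this
      norm_num [lineThrough, det2, pA, pB, pD, Prod.fst_sub, Prod.snd_sub] at this
    · exfalso
      have := (h1 pA memA).2
      rw [h] at this
      norm_num [lineThrough, det2, pA, pC, pD, Prod.fst_sub, Prod.snd_sub] at this
  have eB : ℓ pB = lineThrough pB (pD - pB) := by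
    rcases key (h1 pB memB).1 with h | h | h
    · exfalso
      have := (h1 pB memB).2
      rw [h] at this
      norm_num [lineThrough, det2, pA, pB, pD, Prod.fst_sub, Prod.snd_sub] at this
    · exact h
    · exfalso
      have := (h1 pB memB).2
      rw [h] at this
      norm_num [lineThrough, det2, pB, pC, pD, Prod.fst_sub, Prod.snd_sub] at this
  have eC : ℓ pC = lineThrough pC (pD - pC) := by
    rcases key (h1 pC memC).1 with h | h | h
    · exfalso
      have := (h1 pC memC).2
      rw [h] at this
      norm_num [lineThrough, det2, pA, pC, pD, Prod.fst_sub, Prod.snd_sub] at this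
    · exfalso
      have := (h1 pC memC).2
      rw [h] at this
      norm_num [lineThrough, det2, pB, pC, pD, Prod.fst_sub, Prod.snd_sub] at this
    · exact h
  have hDA : pD ≠ pA := by simp [pA, pD, Prod.ext_iff]
  have hDB : pD ≠ pB := by simp [pB, pD, Prod.ext_iff]
  have hDC : pD ≠ pC := by simp [pC, pD, Prod.ext_iff]
  rcases key (h1 pD memD).1 with h | h | h
  · exact h2 pD memD pA memA hDA (h.trans eA.symm)
  · exact h2 pD memD pB memB hDB (h.trans eB.symm)
  · exact h2 pD memD pC memC hDC (h.trans eC.symm)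
end
end

section
/- The sequence rcr(K_n)/C(n,4) is monotone non-decreasing in n for n ≥ 4. -/
open Filter Set

noncomputable section

/-- Two closed segments cross iff their relative interiors meet. -/
def SegCross (e f : Sym2 Pt) : Prop :=
  ∃ a b c d : Pt, e = s(a, b) ∧ f = s(c, d) ∧
    (openSegment ℝ a b ∩ openSegment ℝ c d).Nonempty

/-- `e` is an edge of the complete rectilinear drawing on `S`. -/
def IsEdgeOf (S : Finset Pt) (e : Sym2 Pt) : Prop :=
  ∃ a b : Pt, a ∈ S ∧ b ∈ S ∧ a ≠ b ∧ e = s(a, b)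

/-- The number of pairs of edges that cross in the rectilinear drawing of the
complete graph with vertex set `S`. -/
def rcrSet (S : Finset Pt) : ℕ :=
  Set.ncard { q : Sym2 (Sym2 Pt) | ∃ e f : Sym2 Pt,
    q = s(e, f) ∧ e ≠ f ∧ IsEdgeOf S e ∧ IsEdgeOf S f ∧ SegCross e f }

/-- The rectilinear crossing number of the complete graph on `n` vertices. -/
def rcrK (n : ℕ) : ℕ :=
  sInf { m : ℕ | ∃ S : Finset Pt, S.card = n ∧ GenPos S ∧ rcrSet S = m }

-- ==== auxiliary development ====

def crossSet (S : Finset Pt) : Set (Sym2 (Sym2 Pt)) :=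
  { q : Sym2 (Sym2 Pt) | ∃ e f : Sym2 Pt,
    q = s(e, f) ∧ e ≠ f ∧ IsEdgeOf S e ∧ IsEdgeOf S f ∧ SegCross e f }

lemma rcrSet_eq (S : Finset Pt) : rcrSet S = (crossSet S).ncard := rfl

lemma isEdgeOf_endpoints {S : Finset Pt} {e : Sym2 Pt} {a b : Pt}
    (h : IsEdgeOf S e) (he : e = s(a, b)) : a ∈ S ∧ b ∈ S ∧ a ≠ b := by
  obtain ⟨a', b', ha', hb', hne, rfl⟩ := h
  rw [Sym2.eq_iff] at he
  rcases he with ⟨rfl, rfl⟩ | ⟨rfl, rfl⟩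
  · exact ⟨ha', hb', hne⟩
  · exact ⟨hb', ha', hne.symm⟩

lemma collinear_of_openSegment_inter {a b d : Pt}
    (h : (openSegment ℝ a b ∩ openSegment ℝ a d).Nonempty) :
    Collinear ℝ ({a, b, d} : Set Pt) := by
  obtain ⟨x, ⟨u, v, hu, hv, huv, hx⟩, ⟨u', t, hu', ht, hut, hx'⟩⟩ := h
  have key : v • (b - a) = t • (d - a) := by
    have h1 : v • (b - a) = x - a := by
      rw [← hx]; rw [show u = 1 - v by linarith]
      module
    have h2 : t • (d - a) = x - a := by
      rw [← hx']; rw [show u' = 1 - t by linarith]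
      module
    rw [h1, h2]
  rw [collinear_iff_of_mem (Set.mem_insert a {b, d})]
  refine ⟨d - a, ?_⟩
  intro p hp
  rcases hp with h | h | h <;> subst h
  · exact ⟨0, by simp⟩
  · refine ⟨t / v, ?_⟩
    have hv' : v ≠ 0 := ne_of_gt hv
    have hh : (t / v) • (d - a) = p - a := by
      rw [div_eq_mul_inv, mul_comm, mul_smul, ← key, inv_smul_smul₀ hv']
    rw [vadd_eq_add, hh]; abel
  · exact ⟨1, by rw [vadd_eq_add, one_smul]; abel⟩

lemma crossSet_support {S : Finset Pt} (hS : GenPos S) {q : Sym2 (Sym2 Pt)}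
    (hq : q ∈ crossSet S) :
    ∃ T : Finset Pt, T ⊆ S ∧ T.card = 4 ∧
      ∀ S' : Finset Pt, (q ∈ crossSet S' ↔ T ⊆ S') := by
  obtain ⟨e, f, rfl, hef, he, hf, a, b, c, d, hea, hfc, hcr⟩ := hq
  obtain ⟨haS, hbS, hab⟩ := isEdgeOf_endpoints he hea
  obtain ⟨hcS, hdS, hcd⟩ := isEdgeOf_endpoints hf hfc
  -- distinctness of the four points
  have hENE : s(a,b) ≠ s(c,d) := by rw [← hea, ← hfc]; exact hef
  have hac : a ≠ c := by
    rintro rfl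
    have hbd : b ≠ d := by rintro rfl; exact hENE rfl
    exact hS a haS b hbS d hdS hab (hcd) hbd (collinear_of_openSegment_inter hcr)
  have had : a ≠ d := by
    rintro rfl
    have hbc : b ≠ c := by
      rintro rfl; exact hENE (Sym2.eq_swap)
    have : (openSegment ℝ a b ∩ openSegment ℝ a c).Nonempty := by
      rwa [openSegment_symm ℝ c a] at hcr
    exact hS a haS b hbS c hcS hab (hcd.symm) hbc (collinear_of_openSegment_inter this)
  have hbc : b ≠ c := by
    rintro rfl
    have had' : a ≠ d := had
    have : (openSegment ℝ b a ∩ openSegment ℝ b d).Nonempty := by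
      rwa [openSegment_symm ℝ a b] at hcr
    exact hS b hbS a haS d hdS hab.symm hcd had' (collinear_of_openSegment_inter this)
  have hbd : b ≠ d := by
    rintro rfl
    have : (openSegment ℝ b a ∩ openSegment ℝ b c).Nonempty := by
      rw [openSegment_symm ℝ a b, openSegment_symm ℝ c b] at hcr; exact hcr
    exact hS b hbS a haS c hcS hab.symm hbc hac (collinear_of_openSegment_inter this)
  refine ⟨{a, b, c, d}, ?_, ?_, ?_⟩
  · intro x hx
    simp only [Finset.mem_insert, Finset.mem_singleton] at hx
    rcases hx with rfl | rfl | rfl | rfl <;> assumption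
  · rw [Finset.card_insert_of_notMem (by simp [hab, hac, had]),
       Finset.card_insert_of_notMem (by simp [hbc, hbd]),
       Finset.card_insert_of_notMem (by simp [hcd])]
    simp
  · intro S'
    constructor
    · rintro ⟨e', f', hq', hef', he', hf'⟩
      have hends : IsEdgeOf S' e ∧ IsEdgeOf S' f := by
        rcases Sym2.eq_iff.mp hq' with ⟨h1, h2⟩ | ⟨h1, h2⟩
        · exact ⟨h1 ▸ he', h2 ▸ hf'.1⟩
        · exact ⟨h1 ▸ hf'.1, h2 ▸ he'⟩
      obtain ⟨ha', hb', -⟩ := isEdgeOf_endpoints hends.1 hea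
      obtain ⟨hc', hd', -⟩ := isEdgeOf_endpoints hends.2 hfc
      intro x hx
      simp only [Finset.mem_insert, Finset.mem_singleton] at hx
      rcases hx with rfl | rfl | rfl | rfl <;> assumption
    · intro hT
      have ha' : a ∈ S' := hT (by simp)
      have hb' : b ∈ S' := hT (by simp)
      have hc' : c ∈ S' := hT (by simp)
      have hd' : d ∈ S' := hT (by simp)
      exact ⟨e, f, rfl, hef, ⟨a, b, ha', hb', hab, hea⟩, ⟨c, d, hc', hd', hcd, hfc⟩,
        a, b, c, d, hea, hfc, hcr⟩

lemma crossSet_finite (S : Finset Pt) (hS : GenPos S) : (crossSet S).Finite := by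
  have hsub : crossSet S ⊆
      (fun p : (Pt × Pt) × Pt × Pt => s(s(p.1.1, p.1.2), s(p.2.1, p.2.2))) ''
        ((↑S ×ˢ ↑S) ×ˢ (↑S ×ˢ ↑S)) := by
    intro q hq
    obtain ⟨T, hTS, hT4, hmem⟩ := crossSet_support hS hq
    obtain ⟨e, f, rfl, hef, he, hf, a, b, c, d, hea, hfc, hcr⟩ := hq
    obtain ⟨haS, hbS, -⟩ := isEdgeOf_endpoints he hea
    obtain ⟨hcS, hdS, -⟩ := isEdgeOf_endpoints hf hfc
    exact ⟨((a, b), (c, d)), ⟨⟨haS, hbS⟩, hcS, hdS⟩, by simp [← hea, ← hfc]⟩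
  exact Set.Finite.subset (Set.Finite.image _ (((S.finite_toSet.prod S.finite_toSet).prod
    (S.finite_toSet.prod S.finite_toSet)))) hsub

lemma crossSet_mono {S S' : Finset Pt} (h : S' ⊆ S) : crossSet S' ⊆ crossSet S := by
  rintro q ⟨e, f, rfl, hef, ⟨a, b, ha, hb, hab, hea⟩, ⟨c, d, hc, hd, hcd, hfc⟩, hcr⟩
  exact ⟨e, f, rfl, hef, ⟨a, b, h ha, h hb, hab, hea⟩, ⟨c, d, h hc, h hd, hcd, hfc⟩, hcr⟩

lemma genPos_mono {S S' : Finset Pt} (h : S' ⊆ S) (hS : GenPos S) : GenPos S' :=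
  fun a ha b hb c hc => hS a (h ha) b (h hb) c (h hc)

/-- Points on the moment curve. -/
lemma momentCurve_genPos (n : ℕ) :
    ∃ S : Finset Pt, S.card = n ∧ GenPos S := by
  classical
  refine ⟨Finset.image (fun i : ℕ => ((i : ℝ), (i : ℝ) ^ 2)) (Finset.range n), ?_, ?_⟩
  · have hinj : Function.Injective (fun i : ℕ => ((i : ℝ), (i : ℝ) ^ 2)) := by
      intro i j hij; simp only [Prod.mk.injEq] at hij; exact_mod_cast hij.1
    rw [Finset.card_image_of_injective _ hinj, Finset.card_range]
  · intro a ha b hb c hc hab hac hbc hcol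
    simp only [Finset.mem_image, Finset.mem_range] at ha hb hc
    obtain ⟨i, -, rfl⟩ := ha
    obtain ⟨j, -, rfl⟩ := hb
    obtain ⟨k, -, rfl⟩ := hc
    set x := (i : ℝ); set y := (j : ℝ); set z := (k : ℝ)
    have hxy : x ≠ y := fun h => hab (by simp [h])
    have hxz : x ≠ z := fun h => hac (by simp [h])
    have hyz : y ≠ z := fun h => hbc (by simp [h])
    rw [collinear_iff_of_mem (Set.mem_insert _ _)] at hcol
    obtain ⟨v, hv⟩ := hcol
    obtain ⟨r, hr⟩ := hv (y, y ^ 2) (by simp)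
    obtain ⟨s, hs⟩ := hv (z, z ^ 2) (by simp)
    rw [vadd_eq_add, Prod.ext_iff] at hr hs
    simp only [Prod.fst_add, Prod.snd_add, Prod.smul_fst, Prod.smul_snd, smul_eq_mul] at hr hs
    -- det vanishes
    have hdet : (y - x) * (z ^ 2 - x ^ 2) - (y ^ 2 - x ^ 2) * (z - x) = 0 := by
      have h1 : y - x = r * v.1 := by linarith [hr.1]
      have h2 : y ^ 2 - x ^ 2 = r * v.2 := by linarith [hr.2]
      have h3 : z - x = s * v.1 := by linarith [hs.1]
      have h4 : z ^ 2 - x ^ 2 = s * v.2 := by linarith [hs.2]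
      rw [h1, h2, h3, h4]; ring
    have hfac : (y - x) * (z - x) * (z - y) = 0 := by nlinarith [hdet]
    rcases mul_eq_zero.mp hfac with h | h
    · rcases mul_eq_zero.mp h with h' | h'
      · exact hxy (by linarith)
      · exact hxz (by linarith)
    · exact hyz (by linarith)

lemma double_count (S : Finset Pt) (hS : GenPos S) (h4 : 4 ≤ S.card) :
    ∑ x ∈ S, rcrSet (S.erase x) = (S.card - 4) * rcrSet S := by
  classical
  have hfin := crossSet_finite S hS
  set F : Finset (Sym2 (Sym2 Pt)) := hfin.toFinset with hF
  have hrcr : rcrSet S = F.card := by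
    rw [rcrSet_eq, Set.ncard_eq_toFinset_card _ hfin]
  have herase : ∀ x ∈ S, rcrSet (S.erase x) =
      (F.filter (fun q => q ∈ crossSet (S.erase x))).card := by
    intro x hx
    have hfin' := crossSet_finite (S.erase x) (genPos_mono (Finset.erase_subset x S) hS)
    rw [rcrSet_eq, Set.ncard_eq_toFinset_card _ hfin']
    congr 1
    apply Finset.ext
    intro q
    simp only [Set.Finite.mem_toFinset, Finset.mem_filter, hF]
    constructor
    · intro hq
      exact ⟨crossSet_mono (Finset.erase_subset x S) hq, hq⟩
    · exact fun h => h.2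
  calc ∑ x ∈ S, rcrSet (S.erase x)
      = ∑ x ∈ S, (F.filter (fun q => q ∈ crossSet (S.erase x))).card :=
        Finset.sum_congr rfl herase
    _ = ∑ x ∈ S, ∑ q ∈ F, if q ∈ crossSet (S.erase x) then 1 else 0 :=
        Finset.sum_congr rfl (fun x _ => Finset.card_filter _ _)
    _ = ∑ q ∈ F, ∑ x ∈ S, if q ∈ crossSet (S.erase x) then 1 else 0 := Finset.sum_comm
    _ = ∑ q ∈ F, (S.filter (fun x => q ∈ crossSet (S.erase x))).card :=
        Finset.sum_congr rfl (fun q _ => (Finset.card_filter _ _).symm)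
    _ = ∑ q ∈ F, (S.card - 4) := by
        apply Finset.sum_congr rfl
        intro q hq
        rw [hF, Set.Finite.mem_toFinset] at hq
        obtain ⟨T, hTS, hT4, hmem⟩ := crossSet_support hS hq
        have : S.filter (fun x => q ∈ crossSet (S.erase x)) = S \ T := by
          apply Finset.ext
          intro x
          simp only [Finset.mem_filter, Finset.mem_sdiff, hmem]
          constructor
          · rintro ⟨hxS, hsub⟩
            exact ⟨hxS, fun hxT => (Finset.notMem_erase x S) (hsub hxT)⟩
          · rintro ⟨hxS, hxT⟩
            exact ⟨hxS, Finset.subset_erase.mpr ⟨hTS, hxT⟩⟩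
        rw [this, Finset.card_sdiff_of_subset hTS, hT4]
    _ = (S.card - 4) * rcrSet S := by
        rw [Finset.sum_const, smul_eq_mul, hrcr, mul_comm]

lemma key_ineq (n : ℕ) (hn : 4 ≤ n) :
    (n + 1) * rcrK n ≤ (n - 3) * rcrK (n + 1) := by
  obtain ⟨S₀, hc₀, hg₀⟩ := momentCurve_genPos (n + 1)
  have hne : {m : ℕ | ∃ S : Finset Pt, S.card = n + 1 ∧ GenPos S ∧ rcrSet S = m}.Nonempty :=
    ⟨rcrSet S₀, S₀, hc₀, hg₀, rfl⟩
  obtain ⟨S, hcard, hgp, hm⟩ := Nat.sInf_mem hne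
  have hsum := double_count S hgp (by omega)
  have hlow : ∀ x ∈ S, rcrK n ≤ rcrSet (S.erase x) := by
    intro x hx
    exact Nat.sInf_le ⟨S.erase x,
      by rw [Finset.card_erase_of_mem hx, hcard]; omega, genPos_mono (Finset.erase_subset x S) hgp, rfl⟩
  have h1 : S.card • rcrK n ≤ ∑ x ∈ S, rcrSet (S.erase x) :=
    Finset.card_nsmul_le_sum S _ _ hlow
  rw [hsum, hcard, hm] at h1
  rw [smul_eq_mul] at h1
  have : n + 1 - 4 = n - 3 := by omega
  rwa [this] at h1

lemma choose_identity (n : ℕ) (hn : 4 ≤ n) :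
    (n + 1) * n.choose 4 = (n - 3) * (n + 1).choose 4 := by
  have hA : n.choose 4 * 4 = n.choose 3 * (n - 3) := Nat.choose_succ_right_eq n 3
  have hB : (n + 1) * n.choose 3 = (n + 1).choose 4 * 4 := Nat.add_one_mul_choose_eq n 3
  apply Nat.eq_of_mul_eq_mul_right (show 0 < 4 by norm_num)
  calc (n + 1) * n.choose 4 * 4 = (n + 1) * (n.choose 4 * 4) := by ring
    _ = (n + 1) * (n.choose 3 * (n - 3)) := by rw [hA]
    _ = ((n + 1) * n.choose 3) * (n - 3) := by ring
    _ = ((n + 1).choose 4 * 4) * (n - 3) := by rw [hB]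
    _ = (n - 3) * (n + 1).choose 4 * 4 := by ring

/-- The sequence `rcr(K_n)/C(n,4)` is monotone non-decreasing for `n ≥ 4`. -/
theorem rcrK_ratio_monotone (n : ℕ) (hn : 4 ≤ n) :
    (rcrK n : ℝ) / (n.choose 4 : ℝ) ≤ (rcrK (n + 1) : ℝ) / ((n + 1).choose 4 : ℝ) := by
  have hc1 : (0 : ℝ) < (n.choose 4 : ℝ) := by exact_mod_cast Nat.choose_pos hn
  have hc2 : (0 : ℝ) < ((n + 1).choose 4 : ℝ) := by
    exact_mod_cast Nat.choose_pos (by omega : 4 ≤ n + 1)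
  rw [div_le_div_iff₀ hc1 hc2]
  have hnat : rcrK n * (n + 1).choose 4 ≤ rcrK (n + 1) * n.choose 4 := by
    have hmul : (n + 1) * (rcrK n * (n + 1).choose 4) ≤ (n + 1) * (rcrK (n + 1) * n.choose 4) := by
      calc (n + 1) * (rcrK n * (n + 1).choose 4)
          = ((n + 1) * rcrK n) * (n + 1).choose 4 := by ring
        _ ≤ ((n - 3) * rcrK (n + 1)) * (n + 1).choose 4 :=
            Nat.mul_le_mul_right _ (key_ineq n hn)
        _ = rcrK (n + 1) * ((n - 3) * (n + 1).choose 4) := by ring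
        _ = rcrK (n + 1) * ((n + 1) * n.choose 4) := by rw [← choose_identity n hn]
        _ = (n + 1) * (rcrK (n + 1) * n.choose 4) := by ring
    exact Nat.le_of_mul_le_mul_left hmul (by omega)
  exact_mod_cast hnat
end
end

section
/- Define f(n) = 16·f(n/2) + (n/4)(2(n/2)² − 7(n/2) + 5) with f(n₀) = c for a fixed even n₀ and c ≥ 0, on the sequence n = 2^k n₀. Then lim_{k→∞} f(2^k n₀)/C(2^k n₀, 4) = (24c + 3n₀³ − 7n₀² + (30/7)n₀)/n₀⁴. -/
open Filter

lemma cast_choose_four (n : ℕ) :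
    ((n.choose 4 : ℕ) : ℝ) = (n : ℝ) * ((n : ℝ) - 1) * ((n : ℝ) - 2) * ((n : ℝ) - 3) / 24 := by
  rcases lt_or_ge n 4 with h | h
  · interval_cases n <;> norm_num [Nat.choose]
  · have h3 : 3 ≤ n := by omega
    have hd : n.descFactorial 4 = n * (n - 1) * (n - 2) * (n - 3) := by
      simp [Nat.descFactorial]; ring
    have hc : 24 * n.choose 4 = n * (n - 1) * (n - 2) * (n - 3) := by
      rw [← hd, Nat.descFactorial_eq_factorial_mul_choose]
      norm_num [Nat.factorial]
    have := congrArg (fun m : ℕ => (m : ℝ)) hc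
    push_cast [Nat.cast_sub (by omega : 1 ≤ n), Nat.cast_sub (by omega : 2 ≤ n),
      Nat.cast_sub h3] at this
    linarith

/-- Iterating the doubling recurrence
`f(2m) = 16·f(m) + (m/2)(2m² − 7m + 5)` starting from an even `n₀` with value
`c ≥ 0`, the normalized sequence `f(2^k n₀)/C(2^k n₀, 4)` converges to
`(24c + 3n₀³ − 7n₀² + (30/7)n₀)/n₀⁴`. -/
theorem doubling_recurrence_limit (n₀ : ℕ) (hn₀ : 0 < n₀) (hE : Even n₀)
    (c : ℝ) (hc : 0 ≤ c) (f : ℕ → ℝ) (hf0 : f 0 = c)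
    (hrec : ∀ k : ℕ, f (k + 1) =
      16 * f k + ((2 ^ k * n₀ : ℕ) : ℝ) / 2 *
        (2 * ((2 ^ k * n₀ : ℕ) : ℝ) ^ 2 - 7 * ((2 ^ k * n₀ : ℕ) : ℝ) + 5)) :
    Tendsto (fun k : ℕ => f k / (((2 ^ k * n₀).choose 4 : ℕ) : ℝ)) atTop
      (nhds ((24 * c + 3 * (n₀ : ℝ) ^ 3 - 7 * (n₀ : ℝ) ^ 2 + (30 / 7) * (n₀ : ℝ)) /
        (n₀ : ℝ) ^ 4)) := by
  set N : ℝ := (n₀ : ℝ) with hN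
  have hNpos : 0 < N := by rw [hN]; exact_mod_cast hn₀
  -- closed form for f
  have hfg : ∀ k : ℕ, f k = c * ((2:ℝ)^k)^4 + N^3 * (((2:ℝ)^k)^4 - ((2:ℝ)^k)^3) / 8
      - 7 * N^2 * (((2:ℝ)^k)^4 - ((2:ℝ)^k)^2) / 24
      + 5 * N * (((2:ℝ)^k)^4 - (2:ℝ)^k) / 28 := by
    intro k
    induction k with
    | zero => simp [hf0]
    | succ k ih =>
      rw [hrec k, ih]
      push_cast
      ring
  have hx : ∀ k : ℕ, ((2:ℝ)^k) ≠ 0 := fun k => by positivity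
  -- limit of (1/2)^k
  have hu : Tendsto (fun k : ℕ => ((1:ℝ)/2)^k) atTop (nhds 0) := by
    apply tendsto_pow_atTop_nhds_zero_of_lt_one <;> norm_num
  -- numerator limit
  have hnum : Tendsto (fun k : ℕ => f k / ((2:ℝ)^k)^4) atTop
      (nhds (c + N^3/8 - 7*N^2/24 + 5*N/28)) := by
    have hcont : Continuous (fun y : ℝ =>
        c + N^3*(1 - y)/8 - 7*N^2*(1 - y^2)/24 + 5*N*(1 - y^3)/28) := by fun_prop
    have := (hcont.tendsto 0).comp hu
    simp only [Function.comp_def] at this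
    convert this using 2 with k
    · rw [hfg k]
      have h2 : ((1:ℝ)/2)^k = 1 / (2:ℝ)^k := by rw [div_pow]; norm_num
      rw [h2]
      field_simp
    · norm_num
  -- denominator limit
  have hden : Tendsto (fun k : ℕ => (((2 ^ k * n₀).choose 4 : ℕ) : ℝ) / ((2:ℝ)^k)^4) atTop
      (nhds (N^4/24)) := by
    have hcont : Continuous (fun y : ℝ =>
        N * (N - y) * (N - 2*y) * (N - 3*y) / 24) := by fun_prop
    have := (hcont.tendsto 0).comp hu
    simp only [Function.comp_def] at this
    convert this using 2 with k
    · rw [cast_choose_four]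
      have h2 : ((1:ℝ)/2)^k = 1 / (2:ℝ)^k := by rw [div_pow]; norm_num
      rw [h2]
      push_cast
      field_simp
      ring
    · ring
  have hden_ne : (N^4/24 : ℝ) ≠ 0 := by positivity
  have := hnum.div hden hden_ne
  have heq : ∀ k : ℕ, (f k / ((2:ℝ)^k)^4) / ((((2 ^ k * n₀).choose 4 : ℕ) : ℝ) / ((2:ℝ)^k)^4)
      = f k / (((2 ^ k * n₀).choose 4 : ℕ) : ℝ) := by
    intro k
    rw [div_div_div_cancel_right₀]
    exact pow_ne_zero 4 (hx k)
  rw [show (24 * c + 3 * (n₀ : ℝ) ^ 3 - 7 * (n₀ : ℝ) ^ 2 + (30 / 7) * (n₀ : ℝ)) / (n₀ : ℝ) ^ 4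
      = (c + N^3/8 - 7*N^2/24 + 5*N/28) / (N^4/24) by
    rw [hN]; field_simp; ring]
  exact this.congr heq
end
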